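/- For |t| > πℏ, |sinc(t/(2ℏ))| ≥ (2/(π|t|)) · dist(t, Z₀), where Z₀ = {2πkℏ : k ∈ ℤ, k ≠ 0}. -/

import Mathlib

open Real Metric

noncomputable def sinc (t : ℝ) : ℝ := if t = 0 then 1 else Real.sin t / t

theorem sinc_bound_large (ℏ : ℝ) (hℏ : 0 < ℏ) (t : ℝ) (ht : |t| > π * ℏ) :
    |_root_.sinc (t / (2 * ℏ))| ≥
      (2 / (π * |t|)) * Metric.infDist t {s : ℝ | ∃ k : ℤ, k ≠ 0 ∧ s = 2 * π * (k : ℝ) * ℏ} := by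
  have hπ := Real.pi_pos
  have ht0 : 0 < |t| := lt_trans (by positivity) ht
  have htne : t ≠ 0 := abs_pos.mp ht0
  set s : ℝ := t / (2 * ℏ) with hsdef
  have hsne : s ≠ 0 := div_ne_zero htne (by positivity)
  have habs_s : |s| = |t| / (2 * ℏ) := by
    rw [hsdef, abs_div, abs_of_pos (show (0:ℝ) < 2 * ℏ by positivity)]
  have hsgt : π / 2 < |s| := by
    rw [habs_s, lt_div_iff₀ (by positivity)]
    nlinarith
  set k : ℤ := round (s / π) with hk
  have hu : |s - π * k| ≤ π / 2 := by
    have h1 : |s / π - k| ≤ 1 / 2 := abs_sub_round (s / π)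
    have h2 : s - π * k = π * (s / π - k) := by field_simp
    rw [h2, abs_mul, abs_of_pos hπ]
    nlinarith
  have hkne : k ≠ 0 := by
    intro h
    rw [h] at hu
    simp at hu
    linarith [hsgt.trans_le hu]
  -- |sin s| = |sin (s - π k)|
  have hsin : |Real.sin s| = |Real.sin (s - π * k)| := by
    have : Real.sin ((s - π * k) + k * π) = (-1) ^ k * Real.sin (s - π * k) :=
      Real.sin_add_int_mul_pi _ k
    have h2 : Real.sin s = (-1) ^ k * Real.sin (s - π * k) := by
      rw [← this]; ring_nf
    rw [h2, abs_mul]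
    rcases Int.even_or_odd k with he | ho
    · rw [he.neg_one_zpow]; simp
    · rw [ho.neg_one_zpow]; simp
  -- Jordan
  have hJ : 2 * |s - π * k| ≤ |Real.sin (s - π * k)| * π := by
    have := Real.mul_abs_le_abs_sin hu
    rw [div_mul_eq_mul_div, div_le_iff₀ hπ] at this
    linarith
  -- infDist bound
  set S : Set ℝ := {s : ℝ | ∃ k : ℤ, k ≠ 0 ∧ s = 2 * π * (k : ℝ) * ℏ} with hS
  have hmem : (2 * π * (k : ℝ) * ℏ) ∈ S := ⟨k, hkne, rfl⟩
  have hd : Metric.infDist t S ≤ 2 * ℏ * |s - π * k| := by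
    refine le_trans (Metric.infDist_le_dist_of_mem hmem) ?_
    rw [Real.dist_eq]
    have : t - 2 * π * (k : ℝ) * ℏ = 2 * ℏ * (s - π * k) := by
      rw [hsdef]; field_simp
    rw [this, abs_mul, abs_of_pos (by positivity)]
  have hd0 : 0 ≤ Metric.infDist t S := Metric.infDist_nonneg
  -- compute |sinc s|
  have hsinc : |_root_.sinc s| = |Real.sin (s - π * k)| * (2 * ℏ) / |t| := by
    rw [_root_.sinc, if_neg hsne, abs_div, hsin, habs_s]
    field_simp
  rw [hsinc, ge_iff_le]
  have heq : 2 / (π * |t|) * Metric.infDist t S = (2 * Metric.infDist t S) / (π * |t|) := by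
    ring
  rw [heq, div_le_div_iff₀ (by positivity) ht0]
  have hu0 : 0 ≤ |s - π * k| := abs_nonneg _
  have key : 2 * Metric.infDist t S ≤ |Real.sin (s - π * k)| * (2 * ℏ) * π := by
    nlinarith [mul_le_mul_of_nonneg_left hJ hℏ.le]
  nlinarith [mul_le_mul_of_nonneg_right key ht0.le]
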